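/- For a monic polynomial q(x) = x^k + a_1 x^{k-1} + ... + a_k with real coefficients, the Lebesgue measure of the set {x ∈ ℝ : |q(x)| ≤ ε} is at most C_k ε^{1/k}, where C_k depends only on k. -/

import Mathlib

open MeasureTheory Set Polynomial

private lemma prod_abs_re_le_aux (x : ℝ) (s : Multiset ℂ) :
    (s.map fun a => |x - a.re|).prod ≤ (s.map fun a => ‖(x : ℂ) - a‖).prod := by
  induction s using Multiset.induction with
  | empty => simp
  | cons a t ih =>
    simp only [Multiset.map_cons, Multiset.prod_cons]
    have h1 : |x - a.re| ≤ ‖(x : ℂ) - a‖ := by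
      have := Complex.abs_re_le_norm ((x : ℂ) - a)
      simpa using this
    have h2 : 0 ≤ (t.map fun a => |x - a.re|).prod :=
      Multiset.prod_nonneg (by
        intro y hy
        obtain ⟨b, _, rfl⟩ := Multiset.mem_map.mp hy
        exact abs_nonneg _)
    exact mul_le_mul h1 ih h2 (norm_nonneg _)

private lemma pow_card_le_prod_map_aux {δ : ℝ} (hδ : 0 ≤ δ) (f : ℂ → ℝ) (s : Multiset ℂ)
    (h : ∀ a ∈ s, δ ≤ f a) : δ ^ Multiset.card s ≤ (s.map f).prod := by
  induction s using Multiset.induction with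
  | empty => simp
  | cons a t ih =>
    simp only [Multiset.map_cons, Multiset.prod_cons, Multiset.card_cons, pow_succ]
    rw [mul_comm (δ ^ Multiset.card t) δ]
    exact mul_le_mul (h a (Multiset.mem_cons_self a t))
      (ih fun b hb => h b (Multiset.mem_cons_of_mem hb)) (pow_nonneg hδ _)
      (hδ.trans (h a (Multiset.mem_cons_self a t)))

private lemma exists_close_aux {δ ε : ℝ} (hδ : 0 < δ) (k : ℕ) (hk : 1 ≤ k) (hδk : δ ^ k = ε)
    (x : ℝ) (s : Multiset ℂ) (hcard : Multiset.card s = k)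
    (hle : (s.map fun a => |x - a.re|).prod ≤ ε) :
    ∃ a ∈ s, |x - a.re| ≤ δ := by
  by_contra hcon
  push_neg at hcon
  obtain ⟨a, t, rfl⟩ : ∃ a t, s = a ::ₘ t := by
    have hne : s ≠ 0 := by rintro rfl; simp at hcard; omega
    rcases Multiset.exists_mem_of_ne_zero hne with ⟨a, ha⟩
    exact ⟨a, _, (Multiset.cons_erase ha).symm⟩
  simp only [Multiset.map_cons, Multiset.prod_cons] at hle
  have hct : Multiset.card t + 1 = k := by simpa using hcard
  have h1 : δ ^ Multiset.card t ≤ (t.map fun a => |x - a.re|).prod :=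
    pow_card_le_prod_map_aux hδ.le _ _ fun b hb => (hcon b (Multiset.mem_cons_of_mem hb)).le
  have hpos : 0 < δ ^ Multiset.card t := pow_pos hδ _
  have hlt : δ * δ ^ Multiset.card t < |x - a.re| * (t.map fun a => |x - a.re|).prod := by
    calc δ * δ ^ Multiset.card t < |x - a.re| * δ ^ Multiset.card t :=
          mul_lt_mul_of_pos_right (hcon a (Multiset.mem_cons_self a t)) hpos
      _ ≤ _ := mul_le_mul_of_nonneg_left h1 (abs_nonneg _)
  have heq : δ * δ ^ Multiset.card t = ε := by
    rw [← pow_succ']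
    rw [hct, hδk]
  rw [heq] at hlt
  linarith

/-- For a monic real polynomial `q(x) = x^k + a₁ x^{k-1} + ⋯ + a_k` of
degree `k ≥ 1`, the Lebesgue measure of `{x : |q(x)| ≤ ε}` is at most `C_k ε^{1/k}`
where `C_k` depends only on `k`. -/
theorem vol_sublevel_monic_poly
    (k : ℕ) (hk : 1 ≤ k) :
    ∃ C : ℝ, 0 < C ∧ ∀ (a : Fin k → ℝ) (ε : ℝ), 0 < ε →
      volume {x : ℝ | |x ^ k + ∑ j : Fin k, a j * x ^ (k - 1 - (j : ℕ))| ≤ ε} ≤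
        ENNReal.ofReal (C * ε ^ ((1 : ℝ) / k)) := by
  refine ⟨2 * k, by positivity, ?_⟩
  intro a ε hε
  set δ : ℝ := ε ^ ((1 : ℝ) / k) with hδdef
  have hδ : 0 < δ := Real.rpow_pos_of_pos hε _
  have hδk : δ ^ k = ε := by
    rw [hδdef, ← Real.rpow_natCast (ε ^ ((1 : ℝ) / k)) k, ← Real.rpow_mul hε.le]
    rw [one_div_mul_cancel (by exact_mod_cast Nat.one_le_iff_ne_zero.mp hk : (k : ℝ) ≠ 0)]
    exact Real.rpow_one ε
  set p : Polynomial ℝ := X ^ k + ∑ j : Fin k, C (a j) * X ^ (k - 1 - (j : ℕ)) with hp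
  have heval : ∀ x : ℝ, p.eval x = x ^ k + ∑ j : Fin k, a j * x ^ (k - 1 - (j : ℕ)) := by
    intro x
    simp [hp, eval_finset_sum]
  have hdegsum : (∑ j : Fin k, C (a j) * X ^ (k - 1 - (j : ℕ)) : Polynomial ℝ).degree < k := by
    apply lt_of_le_of_lt (degree_sum_le _ _)
    rw [Finset.sup_lt_iff (by exact_mod_cast WithBot.bot_lt_coe k)]
    intro j _
    apply lt_of_le_of_lt (degree_C_mul_X_pow_le _ _)
    exact_mod_cast Nat.lt_of_le_of_lt (Nat.sub_le _ _) (Nat.sub_lt (by omega) one_pos)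
  have hmon : p.Monic := monic_X_pow_add hdegsum
  have hdeg : p.natDegree = k := by
    have : p.degree = k := by
      rw [hp, degree_add_eq_left_of_degree_lt (by rwa [degree_X_pow])]
      exact degree_X_pow k
    exact natDegree_eq_of_degree_eq_some this
  set P : Polynomial ℂ := p.map (algebraMap ℝ ℂ) with hP
  have hmonP : P.Monic := hmon.map _
  have hdegP : P.natDegree = k := by rw [hP, hmon.natDegree_map, hdeg]
  have hsplit : P.Splits := IsAlgClosed.splits P
  have hcard : Multiset.card P.roots = k := by
    rw [splits_iff_card_roots.mp hsplit, hdegP]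
  have hfact : P = (P.roots.map fun r => X - C r).prod :=
    hsplit.eq_prod_roots_of_monic hmonP
  have hevalC : ∀ x : ℝ, |p.eval x| = (P.roots.map fun r => ‖(x : ℂ) - r‖).prod := by
    intro x
    have h1 : P.eval ((x : ℝ) : ℂ) = (algebraMap ℝ ℂ) (p.eval x) := by
      rw [hP, eval_map]
      have := eval₂_hom (algebraMap ℝ ℂ) (p := p) x
      simpa using this
    have h2 : P.eval ((x : ℝ) : ℂ) = (P.roots.map fun r => ((x : ℂ) - r)).prod := by
      conv_lhs => rw [hfact]
      rw [eval_multiset_prod, Multiset.map_map]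
      simp
    have h3 : ‖(algebraMap ℝ ℂ) (p.eval x)‖ = |p.eval x| := by
      simp
    rw [← h3, ← h1, h2]
    exact (map_multiset_prod (normHom (α := ℂ)) _).trans (by rw [Multiset.map_map]; rfl)
  -- main argument
  have hsub : {x : ℝ | |x ^ k + ∑ j : Fin k, a j * x ^ (k - 1 - (j : ℕ))| ≤ ε} ⊆
      ⋃ r ∈ P.roots.toFinset, Icc (r.re - δ) (r.re + δ) := by
    intro x hx
    simp only [mem_setOf_eq] at hx
    rw [← heval x] at hx
    rw [hevalC x] at hx
    have hle : (P.roots.map fun r => |x - r.re|).prod ≤ ε :=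
      le_trans (prod_abs_re_le_aux x P.roots) hx
    obtain ⟨r, hr, hrle⟩ := exists_close_aux hδ k hk hδk x P.roots hcard hle
    refine mem_biUnion (Multiset.mem_toFinset.mpr hr) ?_
    rw [abs_le] at hrle
    constructor <;> linarith [hrle.1, hrle.2]
  calc volume {x : ℝ | |x ^ k + ∑ j : Fin k, a j * x ^ (k - 1 - (j : ℕ))| ≤ ε}
      ≤ ∑ r ∈ P.roots.toFinset, volume (Icc (r.re - δ) (r.re + δ)) :=
        le_trans (measure_mono hsub) (measure_biUnion_finset_le _ _)
    _ = ∑ r ∈ P.roots.toFinset, ENNReal.ofReal (2 * δ) := by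
        refine Finset.sum_congr rfl fun r _ => ?_
        rw [Real.volume_Icc]
        ring_nf
    _ = P.roots.toFinset.card • ENNReal.ofReal (2 * δ) := by rw [Finset.sum_const]
    _ ≤ k • ENNReal.ofReal (2 * δ) := by
        have hcardle : P.roots.toFinset.card ≤ k := hcard ▸ Multiset.toFinset_card_le P.roots
        rw [nsmul_eq_mul, nsmul_eq_mul]
        exact mul_le_mul_left (by exact_mod_cast hcardle) _
    _ = ENNReal.ofReal (2 * k * δ) := by
        rw [nsmul_eq_mul, ← ENNReal.ofReal_natCast k, ← ENNReal.ofReal_mul (by positivity)]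
        ring_nf
    _ = ENNReal.ofReal (2 * k * ε ^ ((1 : ℝ) / k)) := by rw [hδdef]
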